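/- Let k be a field of characteristic zero, let n ≥ 1, and let A be an integral domain containing k that is a unique factorization domain, whose fraction field has transcendence degree n+1 over k, and with A* = k*. Let D_1, …, D_n be pairwise commuting locally nilpotent k-derivations of A, linearly independent over A, and let f ∈ A \ k with A^{D_1,…,D_n} = k[f]. Define ℳ to be the set of all k-derivations E of A for which there exist a nonzero polynomial q ∈ k[X] and polynomials g_1, …, g_n ∈ k[X] such that q(f)·E(x) = g_1(f)·D_1(x) + ⋯ + g_n(f)·D_n(x) for all x ∈ A. Then there exist E_1, …, E_n ∈ ℳ that are pairwise commuting locally nilpotent k-derivations of A, linearly independent over A, such that every E ∈ ℳ can be written uniquely as E = h_1(f)·E_1 + ⋯ + h_n(f)·E_n with h_1, …, h_n ∈ k[X] (i.e., ℳ is a free k[f]-module with basis E_1, …, E_n). Moreover, for every α ∈ k, if D_1, …, D_n are linearly independent modulo (f − α), then E_1, …, E_n are also linearly independent modulo (f − α). -/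

import Mathlib

open Polynomial

/-- A derivation is locally nilpotent if every element is killed by some iterate. -/
def Derivation.IsLocallyNilpotent {k A : Type*} [CommRing k] [CommRing A] [Algebra k A]
    (D : Derivation k A A) : Prop :=
  ∀ a : A, ∃ m : ℕ, 1 ≤ m ∧ (fun x => D x)^[m] a = 0

/-- A family of derivations is linearly independent modulo an ideal `I` if any `A`-linear
combination of them taking all its values in `I` has all coefficients in `I`. -/
def LinIndepModulo {k A : Type*} [CommRing k] [CommRing A] [Algebra k A] {n : ℕ}
    (D : Fin n → Derivation k A A) (I : Ideal A) : Prop :=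
  ∀ a : Fin n → A, (∀ x : A, ∑ i, a i * D i x ∈ I) → ∀ i, a i ∈ I



theorem st10_trans {k A : Type*} [Field k] [CommRing A] [IsDomain A] [Algebra k A]
    (hunits : ∀ a : A, IsUnit a → ∃ c : k, algebraMap k A c = a)
    (f : A) (hf : f ∉ (algebraMap k A).range) : Transcendental k f := by
  have hf0 : f ≠ 0 := by rintro rfl; exact hf ⟨0, by simp⟩
  rintro ⟨p, hp0, hp⟩
  have key : ∀ (N : ℕ) (p : k[X]), p.natDegree = N → p ≠ 0 → (Polynomial.aeval f) p = 0 → False := by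
    intro N
    induction N using Nat.strong_induction_on with
    | _ N ih =>
    intro p hdeg hp0 hp
    subst hdeg
    by_cases hc : p.coeff 0 = 0
    · have h1 : p = Polynomial.X * p.divX := by
        conv_lhs => rw [← Polynomial.X_mul_divX_add p]
        rw [hc, map_zero, add_zero]
      have hdvX0 : p.divX ≠ 0 := by
        rintro h; rw [h, mul_zero] at h1; exact hp0 h1
      have hde : (Polynomial.aeval f) p.divX = 0 := by
        have h2 := hp
        rw [h1, map_mul, Polynomial.aeval_X] at h2
        rcases mul_eq_zero.mp h2 with h | h
        · exact absurd h hf0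
        · exact h
      have hlt : p.divX.natDegree < p.natDegree := by
        have := Polynomial.degree_divX_lt hp0
        exact Polynomial.natDegree_lt_natDegree hdvX0 this
      exact ih p.divX.natDegree hlt p.divX rfl hdvX0 hde
    · have h1 := Polynomial.X_mul_divX_add p
      have h2 : f * (Polynomial.aeval f) p.divX + algebraMap k A (p.coeff 0) = 0 := by
        rw [← hp]
        conv_rhs => rw [← h1]
        rw [map_add, map_mul, Polynomial.aeval_X, Polynomial.aeval_C]
      have hu : IsUnit f := by
        refine IsUnit.of_mul_eq_one (M := A) (a := f)
          ((Polynomial.aeval f) (-(Polynomial.C (p.coeff 0)⁻¹) * p.divX)) ?_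
        have h3 : f * (Polynomial.aeval f) p.divX = - algebraMap k A (p.coeff 0) := by
          linear_combination h2
        have h4 : algebraMap k A (p.coeff 0)⁻¹ * algebraMap k A (p.coeff 0) = 1 := by
          rw [← map_mul, inv_mul_cancel₀ hc, map_one]
        rw [map_mul, map_neg, Polynomial.aeval_C]
        linear_combination (-(algebraMap k A (p.coeff 0)⁻¹)) * h3 + h4
      obtain ⟨c, hcu⟩ := hunits f hu
      exact hf ⟨c, hcu⟩
  exact key p.natDegree p rfl hp0 hp


theorem st10_det {A : Type*} [CommRing A] [IsDomain A] : ∀ (m : ℕ) (v : Fin m → A → A),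
    (∀ c : Fin m → A, (∀ x, ∑ i, c i * v i x = 0) → ∀ i, c i = 0) →
    ∃ x : Fin m → A, (Matrix.of fun i j => v i (x j)).det ≠ 0 := by
  intro m
  induction m with
  | zero =>
    intro v _
    exact ⟨fun _ => 0, by rw [Matrix.det_fin_zero]; exact one_ne_zero⟩
  | succ m ih =>
    intro v hind
    obtain ⟨x, hx⟩ := ih (fun i => v i.castSucc) (by
      intro c hc i
      have h1 : ∀ i, (Fin.snoc c 0 : Fin (m+1) → A) i = 0 := by
        apply hind
        intro x
        rw [Fin.sum_univ_castSucc]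
        simp only [Fin.snoc_castSucc, Fin.snoc_last, zero_mul, add_zero]
        exact hc x
      have := h1 i.castSucc
      rwa [Fin.snoc_castSucc] at this)
    -- cofactor expansion along the last column
    set cof : Fin (m+1) → A := fun i =>
      (-1) ^ ((i : ℕ) + m) * (Matrix.of fun i' j' => v (i.succAbove i') (x j')).det with hcof
    have hexp : ∀ y : A,
        (Matrix.of fun i j => v i ((Fin.snoc x y : Fin (m+1) → A) j)).det = ∑ i, cof i * v i y := by
      intro y
      rw [Matrix.det_succ_column _ (Fin.last m)]
      refine Finset.sum_congr rfl fun i _ => ?_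
      have h1 : (Matrix.of fun i j => v i ((Fin.snoc x y : Fin (m+1) → A) j)) i (Fin.last m) = v i y := by
        simp [Fin.snoc_last]
      have h2 : ((Matrix.of fun i j => v i ((Fin.snoc x y : Fin (m+1) → A) j)).submatrix i.succAbove
          (Fin.last m).succAbove) = Matrix.of fun i' j' => v (i.succAbove i') (x j') := by
        ext i' j'
        simp [Matrix.submatrix_apply, Fin.succAbove_last, Fin.snoc_castSucc]
      rw [h1, h2, hcof]
      ring_nf
      rfl
    have hlast : cof (Fin.last m) ≠ 0 := by
      rw [hcof]
      simp only [Fin.val_last]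
      have h3 : ((Matrix.of fun i' j' => v ((Fin.last m).succAbove i') (x j')).det) =
          (Matrix.of fun (i : Fin m) j => v i.castSucc (x j)).det := by
        congr 1
        ext i' j'
        rw [Fin.succAbove_last]
      intro h
      rcases mul_eq_zero.mp h with h | h
      · exact (pow_ne_zero _ (neg_ne_zero.mpr one_ne_zero)) h
      · rw [h3] at h; exact hx h
    by_contra hcon
    push_neg at hcon
    have hall : ∀ y : A, ∑ i, cof i * v i y = 0 := by
      intro y
      rw [← hexp y]
      exact hcon (Fin.snoc x y)
    exact hlast (hind cof hall (Fin.last m))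


theorem st10_LN_two {R M : Type*} [CommSemiring R] [AddCommMonoid M] [Module R M]
    (S T : Module.End R M) (h : Commute S T)
    (hS : ∀ a : M, ∃ p, (S ^ p) a = 0) (hT : ∀ a : M, ∃ p, (T ^ p) a = 0) (a : M) :
    ∃ p, ((S + T) ^ p) a = 0 := by
  obtain ⟨p, hp⟩ := hS a
  obtain ⟨q, hq⟩ := hT a
  refine ⟨p + q, ?_⟩
  rw [h.add_pow]
  rw [LinearMap.coe_sum, Finset.sum_apply]
  apply Finset.sum_eq_zero
  intro i hi
  rw [Finset.mem_range] at hi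
  have main : (S ^ i) ((T ^ (p + q - i)) a) = 0 := by
    rcases le_or_gt q (p + q - i) with hle | hlt
    · have hTj : (T ^ (p + q - i)) a = 0 := by
        rw [show p + q - i = (p + q - i - q) + q by omega, pow_add, Module.End.mul_apply, hq,
          map_zero]
      rw [hTj, map_zero]
    · have hSi : (S ^ i) a = 0 := by
        rw [show i = (i - p) + p by omega, pow_add, Module.End.mul_apply, hp, map_zero]
      rw [← Module.End.mul_apply, h.pow_pow i (p + q - i), Module.End.mul_apply, hSi, map_zero]
  rw [Module.End.mul_apply, Module.End.mul_apply, Module.End.natCast_apply]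
  rw [map_nsmul, map_nsmul, main, smul_zero]

theorem st10_LN_sum {R M : Type*} [CommSemiring R] [AddCommMonoid M] [Module R M] :
    ∀ (m : ℕ) (T : Fin m → Module.End R M),
    (∀ i j, Commute (T i) (T j)) →
    (∀ i (a : M), ∃ p, ((T i) ^ p) a = 0) →
    ∀ a : M, ∃ p, ((∑ i, T i) ^ p) a = 0 := by
  intro m
  induction m with
  | zero =>
    intro T _ _ a
    exact ⟨1, by simp⟩
  | succ m ih =>
    intro T hcomm hLN a
    rw [Fin.sum_univ_castSucc]
    have hc : Commute (∑ i : Fin m, T i.castSucc) (T (Fin.last m)) :=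
      Commute.sum_left _ _ _ fun i _ => hcomm _ _
    exact st10_LN_two _ _ hc
      (ih (fun i => T i.castSucc) (fun i j => hcomm _ _) (fun i => hLN _))
      (hLN (Fin.last m)) a



section
variable {k A : Type*} [Field k] [CommRing A] [IsDomain A] [Algebra k A]

theorem st10_kills (E : Derivation k A A) (f : A) (hEf : E f = 0) (p : k[X]) :
    E (Polynomial.aeval f p) = 0 := by
  induction p using Polynomial.induction_on with
  | C c => rw [aeval_C]; exact E.map_algebraMap c
  | add p q hp hq => rw [map_add, map_add, hp, hq, add_zero]
  | monomial m c _ =>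
    rw [map_mul, aeval_C, Derivation.leibniz, Derivation.map_algebraMap, smul_zero,
      aeval_X_pow, Derivation.leibniz_pow, hEf, smul_zero, smul_zero, smul_zero, add_zero]

theorem st10_aeval_ne (f : A) (hft : Transcendental k f) {q : k[X]} (hq : q ≠ 0) :
    Polynomial.aeval f q ≠ 0 := by
  intro h
  exact hft ⟨q, hq, h⟩

theorem st10_M_LND {n : ℕ} (D : Fin n → Derivation k A A)
    (hLN : ∀ i, ∀ a : A, ∃ m : ℕ, 1 ≤ m ∧ (fun x => D i x)^[m] a = 0)
    (hcomm : ∀ i j, ∀ x : A, D i (D j x) = D j (D i x))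
    (f : A) (hft : Transcendental k f)
    (hD0 : ∀ i (p : k[X]), D i (Polynomial.aeval f p) = 0)
    (E : Derivation k A A) (q : k[X]) (hq : q ≠ 0) (g : Fin n → k[X])
    (hw : ∀ x, Polynomial.aeval f q * E x = ∑ i, Polynomial.aeval f (g i) * D i x) :
    ∀ a : A, ∃ m : ℕ, 1 ≤ m ∧ (fun x => E x)^[m] a = 0 := by
  classical
  intro a
  set Ti : Fin n → Module.End k A := fun i => Polynomial.aeval f (g i) • (D i : A →ₗ[k] A)
    with hTi
  set T : Module.End k A := ∑ i, Ti i with hTdef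
  have hTiapp : ∀ i x, Ti i x = Polynomial.aeval f (g i) * D i x := by
    intro i x
    rw [hTi]
    simp [smul_eq_mul]
  have hT : ∀ x, T x = ∑ i, Polynomial.aeval f (g i) * D i x := by
    intro x
    rw [hTdef, LinearMap.coe_sum, Finset.sum_apply]
    exact Finset.sum_congr rfl fun i _ => hTiapp i x
  have hTmul : ∀ (p' : k[X]) (y : A), T (Polynomial.aeval f p' * y)
      = Polynomial.aeval f p' * T y := by
    intro p' y
    rw [hT, hT, Finset.mul_sum]
    refine Finset.sum_congr rfl fun i _ => ?_
    rw [Derivation.leibniz, hD0, smul_zero, add_zero, smul_eq_mul]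
    ring
  have hTicomm : ∀ i j, Commute (Ti i) (Ti j) := by
    intro i j
    apply LinearMap.ext
    intro x
    simp only [Module.End.mul_apply, hTiapp, Derivation.leibniz, hD0, smul_zero, add_zero,
      smul_eq_mul]
    rw [hcomm i j]
    ring
  have hTiLN : ∀ i (a : A), ∃ p, ((Ti i) ^ p) a = 0 := by
    intro i a
    have key : ∀ p : ℕ, ((Ti i) ^ p) a
        = (Polynomial.aeval f (g i)) ^ p * (fun x => D i x)^[p] a := by
      intro p
      induction p with
      | zero => simp
      | succ p ih =>
        rw [pow_succ', Module.End.mul_apply, ih, ← map_pow, ← aeval_X_pow (R := k),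
          Function.iterate_succ_apply', hTiapp, Derivation.leibniz, hD0, smul_zero, add_zero,
          smul_eq_mul, aeval_X_pow, map_pow]
        ring
    obtain ⟨m, _, hm⟩ := hLN i a
    exact ⟨m, by rw [key, hm, mul_zero]⟩
  obtain ⟨p, hp⟩ := st10_LN_sum n Ti hTicomm hTiLN a
  have key : ∀ p' : ℕ, (T ^ p') a = (Polynomial.aeval f q) ^ p' * (fun x => E x)^[p'] a := by
    intro p'
    induction p' with
    | zero => simp
    | succ p' ih =>
      rw [pow_succ', Module.End.mul_apply, ih, ← map_pow, ← aeval_X_pow (R := k), hTmul,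
        Function.iterate_succ_apply']
      rw [show (T : Module.End k A) ((fun x => E x)^[p'] a) = ∑ i, Polynomial.aeval f (g i)
        * D i ((fun x => E x)^[p'] a) from hT _, ← hw, aeval_X_pow, map_pow]
      ring
  refine ⟨p + 1, by omega, ?_⟩
  have h1 : (Polynomial.aeval f q) ^ p * (fun x => E x)^[p] a = 0 := by rw [← key, hp]
  have h2 : (fun x => E x)^[p] a = 0 :=
    (mul_eq_zero.mp h1).resolve_left (pow_ne_zero _ (st10_aeval_ne f hft hq))
  rw [Function.iterate_succ_apply', h2]
  exact E.map_zero

theorem st10_M_Ef {n : ℕ} (D : Fin n → Derivation k A A)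
    (f : A) (hft : Transcendental k f)
    (hD0 : ∀ i (p : k[X]), D i (Polynomial.aeval f p) = 0)
    (E : Derivation k A A) (q : k[X]) (hq : q ≠ 0) (g : Fin n → k[X])
    (hw : ∀ x, Polynomial.aeval f q * E x = ∑ i, Polynomial.aeval f (g i) * D i x) :
    ∀ p : k[X], E (Polynomial.aeval f p) = 0 := by
  have hEf : E f = 0 := by
    have h1 := hw f
    have h2 : ∀ i, D i f = 0 := by
      intro i
      have := hD0 i Polynomial.X
      rwa [aeval_X] at this
    simp only [h2, mul_zero, Finset.sum_const_zero] at h1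
    exact (mul_eq_zero.mp h1).resolve_left (st10_aeval_ne f hft hq)
  exact st10_kills E f hEf

theorem st10_M_comm {n : ℕ} (D : Fin n → Derivation k A A)
    (hcomm : ∀ i j, ∀ x : A, D i (D j x) = D j (D i x))
    (f : A) (hft : Transcendental k f)
    (hD0 : ∀ i (p : k[X]), D i (Polynomial.aeval f p) = 0)
    (E : Derivation k A A) (q : k[X]) (hq : q ≠ 0) (g : Fin n → k[X])
    (hw : ∀ x, Polynomial.aeval f q * E x = ∑ i, Polynomial.aeval f (g i) * D i x)
    (E' : Derivation k A A) (q' : k[X]) (hq' : q' ≠ 0) (g' : Fin n → k[X])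
    (hw' : ∀ x, Polynomial.aeval f q' * E' x = ∑ i, Polynomial.aeval f (g' i) * D i x) :
    ∀ x : A, E (E' x) = E' (E x) := by
  intro x
  have hE0 := st10_M_Ef D f hft hD0 E q hq g hw
  have hE0' := st10_M_Ef D f hft hD0 E' q' hq' g' hw'
  have hkey : ∀ x, (Polynomial.aeval f q * Polynomial.aeval f q') * E (E' x)
      = ∑ j, ∑ i, Polynomial.aeval f (g' j) * (Polynomial.aeval f (g i) * D i (D j x)) := by
    intro x
    have h1 : Polynomial.aeval f q' * E (E' x) = E (Polynomial.aeval f q' * E' x) := by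
      rw [Derivation.leibniz, hE0, smul_zero, add_zero, smul_eq_mul]
    calc (Polynomial.aeval f q * Polynomial.aeval f q') * E (E' x)
        = Polynomial.aeval f q * E (Polynomial.aeval f q' * E' x) := by rw [← h1]; ring
      _ = Polynomial.aeval f q * E (∑ i, Polynomial.aeval f (g' i) * D i x) := by rw [hw']
      _ = Polynomial.aeval f q * ∑ j, (Polynomial.aeval f (g' j) * E (D j x)) := by
          rw [map_sum]
          congr 1
          refine Finset.sum_congr rfl fun j _ => ?_
          rw [Derivation.leibniz, hE0, smul_zero, add_zero, smul_eq_mul]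
      _ = ∑ j, Polynomial.aeval f (g' j) * (Polynomial.aeval f q * E (D j x)) := by
          rw [Finset.mul_sum]; refine Finset.sum_congr rfl fun j _ => by ring
      _ = ∑ j, ∑ i, Polynomial.aeval f (g' j) * (Polynomial.aeval f (g i) * D i (D j x)) := by
          refine Finset.sum_congr rfl fun j _ => ?_
          rw [hw, Finset.mul_sum]
  have hkey' : ∀ x, (Polynomial.aeval f q * Polynomial.aeval f q') * E' (E x)
      = ∑ i, ∑ j, Polynomial.aeval f (g i) * (Polynomial.aeval f (g' j) * D j (D i x)) := by
    intro x
    have h1 : Polynomial.aeval f q * E' (E x) = E' (Polynomial.aeval f q * E x) := by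
      rw [Derivation.leibniz, hE0', smul_zero, add_zero, smul_eq_mul]
    calc (Polynomial.aeval f q * Polynomial.aeval f q') * E' (E x)
        = Polynomial.aeval f q' * E' (Polynomial.aeval f q * E x) := by rw [← h1]; ring
      _ = Polynomial.aeval f q' * E' (∑ i, Polynomial.aeval f (g i) * D i x) := by rw [hw]
      _ = Polynomial.aeval f q' * ∑ i, (Polynomial.aeval f (g i) * E' (D i x)) := by
          rw [map_sum]
          congr 1
          refine Finset.sum_congr rfl fun i _ => ?_
          rw [Derivation.leibniz, hE0', smul_zero, add_zero, smul_eq_mul]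
      _ = ∑ i, Polynomial.aeval f (g i) * (Polynomial.aeval f q' * E' (D i x)) := by
          rw [Finset.mul_sum]; refine Finset.sum_congr rfl fun i _ => by ring
      _ = ∑ i, ∑ j, Polynomial.aeval f (g i) * (Polynomial.aeval f (g' j) * D j (D i x)) := by
          refine Finset.sum_congr rfl fun i _ => ?_
          rw [hw', Finset.mul_sum]
  have heq : (Polynomial.aeval f q * Polynomial.aeval f q') * E (E' x)
      = (Polynomial.aeval f q * Polynomial.aeval f q') * E' (E x) := by
    rw [hkey, hkey', Finset.sum_comm]
    refine Finset.sum_congr rfl fun i _ => Finset.sum_congr rfl fun j _ => ?_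
    rw [hcomm j i]
    ring
  exact mul_left_cancel₀
    (mul_ne_zero (st10_aeval_ne f hft hq) (st10_aeval_ne f hft hq')) heq

end



-- helper: vecMul and adjugate
theorem st10_cramer {R : Type*} [CommRing R] {m : ℕ} (v : Fin m → R)
    (Mt : Matrix (Fin m) (Fin m) R) :
    (Matrix.vecMul (Matrix.vecMul v Mt) Mt.adjugate) = fun i => Mt.det * v i := by
  rw [Matrix.vecMul_vecMul, Matrix.mul_adjugate]
  ext i
  simp [Matrix.vecMul, dotProduct, Matrix.one_apply, mul_comm]

theorem st10_vecMul_apply {R : Type*} [CommRing R] {m : ℕ} (v : Fin m → R)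
    (Mt : Matrix (Fin m) (Fin m) R) (j : Fin m) :
    Matrix.vecMul v Mt j = ∑ i, v i * Mt i j := by
  simp [Matrix.vecMul, dotProduct]

theorem st10_q0 {k A : Type*} [Field k] [CommRing A] [IsDomain A]
    [UniqueFactorizationMonoid A] [Algebra k A]
    {n : ℕ} (D : Fin n → Derivation k A A)
    (hindep : ∀ a : Fin n → A, (∀ x : A, ∑ i, a i * D i x = 0) → ∀ i, a i = 0)
    (hunits : ∀ a : A, IsUnit a → ∃ c : k, algebraMap k A c = a)
    (f : A) (hft : Transcendental k f) :
    ∃ q0 : Polynomial k, q0 ≠ 0 ∧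
      ∀ (E : Derivation k A A) (q : Polynomial k) (g : Fin n → Polynomial k),
      q ≠ 0 → (∀ x, Polynomial.aeval f q * E x = ∑ i, Polynomial.aeval f (g i) * D i x) →
      ∃ g' : Fin n → Polynomial k,
        ∀ x, Polynomial.aeval f q0 * E x = ∑ i, Polynomial.aeval f (g' i) * D i x := by
  classical
  have injF : Function.Injective (Polynomial.aeval f : k[X] →ₐ[k] A) :=
    transcendental_iff_injective.mp hft
  obtain ⟨xs, hΔ⟩ := st10_det n (fun i x => D i x) hindep
  set N : Matrix (Fin n) (Fin n) A := Matrix.of fun i j => D i (xs j) with hN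
  set Δ : A := N.det with hΔdef
  letI : NormalizationMonoid A := UniqueFactorizationMonoid.normalizationMonoid.toNormalizationMonoid
  set SetS : Set (Polynomial k) := {t : k[X] | t.Monic ∧ Polynomial.aeval f t ∣ Δ} with hSetS
  have hSne : ∀ t ∈ SetS, Polynomial.aeval f t ≠ 0 := fun t ht =>
    st10_aeval_ne f hft ht.1.ne_zero
  have hfin : SetS.Finite := by
    apply Set.Finite.of_finite_image (f := fun t =>
      UniqueFactorizationMonoid.normalizedFactors (Polynomial.aeval f t))
    · apply Set.Finite.subset
        (Finset.finite_toSet (UniqueFactorizationMonoid.normalizedFactors Δ).powerset.toFinset)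
      rintro s ⟨t, ht, rfl⟩
      rw [Finset.mem_coe, Multiset.mem_toFinset, Multiset.mem_powerset]
      exact (UniqueFactorizationMonoid.dvd_iff_normalizedFactors_le_normalizedFactors
        (hSne t ht) hΔ).mp ht.2
    · intro t1 ht1 t2 ht2 heq
      have hassoc : Associated (Polynomial.aeval f t1) (Polynomial.aeval f t2) :=
        (UniqueFactorizationMonoid.associated_iff_normalizedFactors_eq_normalizedFactors
          (hSne t1 ht1) (hSne t2 ht2)).mpr heq
      obtain ⟨u, hu⟩ := hassoc
      obtain ⟨c, hc⟩ := hunits u u.isUnit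
      have h1 : Polynomial.aeval f (t1 * Polynomial.C c) = Polynomial.aeval f t2 := by
        rw [map_mul, aeval_C, hc, hu]
      have h2 : t1 * Polynomial.C c = t2 := injF h1
      have hc1 : c = 1 := by
        have := congrArg Polynomial.leadingCoeff h2
        rwa [Polynomial.leadingCoeff_mul, Polynomial.leadingCoeff_C, ht1.1.leadingCoeff,
          one_mul, ht2.1.leadingCoeff] at this
      rw [← h2, hc1, map_one, mul_one]
  set q0 : Polynomial k := ∏ t ∈ hfin.toFinset, t with hq0def
  have hq0ne : q0 ≠ 0 := by
    rw [hq0def]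
    apply Finset.prod_ne_zero_iff.mpr
    intro t ht
    exact (hfin.mem_toFinset.mp ht).1.ne_zero
  refine ⟨q0, hq0ne, ?_⟩
  intro E q g hq hw
  -- minimal-degree witness for E
  set P : ℕ → Prop := fun d => ∃ (q' : k[X]) (g' : Fin n → k[X]), q' ≠ 0 ∧ q'.natDegree = d ∧
    ∀ x, Polynomial.aeval f q' * E x = ∑ i, Polynomial.aeval f (g' i) * D i x with hP
  have hPex : ∃ d, P d := ⟨q.natDegree, q, g, hq, rfl, hw⟩
  obtain ⟨q1, g1, hq1, hq1d, hw1⟩ := Nat.find_spec hPex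
  -- the ideal generated by q1 and the g1 i is ⊤
  have hspan : Ideal.span (Set.range (Fin.cons q1 g1 : Fin (n+1) → k[X])) = ⊤ := by
    by_contra hne
    set I : Ideal k[X] := Ideal.span (Set.range (Fin.cons q1 g1 : Fin (n+1) → k[X])) with hI
    have hq1I : q1 ∈ I := Ideal.subset_span ⟨0, Fin.cons_zero _ _⟩
    have hg1I : ∀ i, g1 i ∈ I := fun i => Ideal.subset_span ⟨i.succ, Fin.cons_succ _ _ _⟩
    set d : k[X] := Submodule.IsPrincipal.generator I with hd
    have hdvd : ∀ x ∈ I, d ∣ x := fun x hx =>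
      (Submodule.IsPrincipal.mem_iff_generator_dvd I).mp hx
    obtain ⟨q', hq'⟩ := hdvd q1 hq1I
    have hd0 : d ≠ 0 := by
      intro h
      rw [h, zero_mul] at hq'
      exact hq1 hq'
    have hdnu : ¬ IsUnit d := by
      intro hu
      exact hne (I.eq_top_of_isUnit_mem (Submodule.IsPrincipal.generator_mem I) hu)
    have hq'0 : q' ≠ 0 := by
      rintro rfl
      rw [mul_zero] at hq'
      exact hq1 hq'
    have hddeg : 1 ≤ d.natDegree := by
      by_contra hcon
      push_neg at hcon
      obtain ⟨a, ha⟩ := (Polynomial.natDegree_eq_zero (p := d)).mp (by omega)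
      apply hdnu
      rw [← ha, Polynomial.isUnit_C]
      apply isUnit_iff_ne_zero.mpr
      rintro rfl
      rw [map_zero] at ha
      exact hd0 ha.symm
    -- new witness with q'
    have hdg : ∀ i, ∃ t, g1 i = d * t := fun i => hdvd (g1 i) (hg1I i)
    choose g1' hg1' using hdg
    have hw' : ∀ x, Polynomial.aeval f q' * E x
        = ∑ i, Polynomial.aeval f (g1' i) * D i x := by
      intro x
      have hcancel : Polynomial.aeval f d * (Polynomial.aeval f q' * E x)
          = Polynomial.aeval f d * (∑ i, Polynomial.aeval f (g1' i) * D i x) := by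
        rw [Finset.mul_sum]
        calc Polynomial.aeval f d * (Polynomial.aeval f q' * E x)
            = Polynomial.aeval f q1 * E x := by rw [hq', map_mul]; ring
          _ = ∑ i, Polynomial.aeval f (g1 i) * D i x := hw1 x
          _ = _ := by
              refine Finset.sum_congr rfl fun i _ => ?_
              rw [hg1' i, map_mul]
              ring
      exact mul_left_cancel₀ (st10_aeval_ne f hft hd0) hcancel
    have hlt : q'.natDegree < q1.natDegree := by
      have h5 : q1.natDegree = d.natDegree + q'.natDegree := by
        rw [hq']; exact Polynomial.natDegree_mul hd0 hq'0
      omega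
    rw [hq1d] at hlt
    exact Nat.find_min hPex hlt ⟨q', g1', hq'0, rfl, hw'⟩
  -- Bezout
  obtain ⟨c, hc⟩ : ∃ c : Fin (n+1) → k[X],
      (∑ i, c i • (Fin.cons q1 g1 : Fin (n+1) → k[X]) i) = 1 := by
    have h1 : (1 : k[X]) ∈ Ideal.span (Set.range (Fin.cons q1 g1 : Fin (n+1) → k[X])) := by
      rw [hspan]; trivial
    exact (Submodule.mem_span_range_iff_exists_fun _).mp h1
  -- Cramer
  set u : Fin n → A := fun j => E (xs j) with hu
  set vg : Fin n → A := fun i => Polynomial.aeval f (g1 i) with hvg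
  have hrow : Matrix.vecMul vg N = fun j => Polynomial.aeval f q1 * u j := by
    ext j
    rw [st10_vecMul_apply]
    exact (hw1 (xs j)).symm
  have hcram : ∀ i, Δ * vg i = Polynomial.aeval f q1 * Matrix.vecMul u N.adjugate i := by
    intro i
    have := congrFun (st10_cramer vg N) i
    rw [hrow] at this
    rw [← hΔdef] at this
    rw [← this, st10_vecMul_apply, st10_vecMul_apply, Finset.mul_sum]
    refine Finset.sum_congr rfl fun j _ => by ring
  -- q1(f) divides Δ
  have hdvdΔ : Polynomial.aeval f q1 ∣ Δ := by
    have h2 : Polynomial.aeval f (∑ i, c i • (Fin.cons q1 g1 : Fin (n+1) → k[X]) i)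
        = (1 : A) := by rw [hc, map_one]
    rw [map_sum, Fin.sum_univ_succ] at h2
    simp only [Fin.cons_zero, Fin.cons_succ, smul_eq_mul, map_mul] at h2
    refine ⟨Δ * Polynomial.aeval f (c 0) +
      ∑ i, Polynomial.aeval f (c i.succ) * Matrix.vecMul u N.adjugate i, ?_⟩
    calc Δ = Δ * (Polynomial.aeval f (c 0) * Polynomial.aeval f q1 +
          ∑ i, Polynomial.aeval f (c i.succ) * Polynomial.aeval f (g1 i)) := by
          rw [h2, mul_one]
      _ = Polynomial.aeval f q1 * (Δ * Polynomial.aeval f (c 0)) +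
          ∑ i, Polynomial.aeval f (c i.succ) * (Δ * vg i) := by
          rw [mul_add, Finset.mul_sum]
          congr 1
          · ring
          · exact Finset.sum_congr rfl fun i _ => by rw [hvg]; ring
      _ = _ := by
          rw [mul_add, Finset.mul_sum]
          congr 1
          refine Finset.sum_congr rfl fun i _ => ?_
          rw [hcram i]
          ring
  -- monicization and conclusion
  have hlc : q1.leadingCoeff ≠ 0 := Polynomial.leadingCoeff_ne_zero.mpr hq1
  set qm : k[X] := q1 * Polynomial.C q1.leadingCoeff⁻¹ with hqm
  have hqmm : qm.Monic := Polynomial.monic_mul_leadingCoeff_inv hq1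
  have hqmdvd : Polynomial.aeval f qm ∣ Δ := by
    obtain ⟨t, ht⟩ := hdvdΔ
    refine ⟨algebraMap k A q1.leadingCoeff * t, ?_⟩
    rw [ht, hqm, map_mul, aeval_C]
    rw [← mul_assoc, mul_assoc _ _ (algebraMap k A q1.leadingCoeff), ← map_mul,
      inv_mul_cancel₀ hlc, map_one, mul_one]
  have hqmS : qm ∈ SetS := ⟨hqmm, hqmdvd⟩
  have hq1q0 : q1 ∣ q0 := by
    have h1 : q1 ∣ qm := ⟨Polynomial.C q1.leadingCoeff⁻¹, rfl⟩
    have h2 : qm ∣ q0 := Finset.dvd_prod_of_mem _ (hfin.mem_toFinset.mpr hqmS)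
    exact h1.trans h2
  obtain ⟨s, hs⟩ := hq1q0
  refine ⟨fun i => g1 i * s, fun x => ?_⟩
  rw [hs, map_mul]
  calc Polynomial.aeval f q1 * Polynomial.aeval f s * E x
      = Polynomial.aeval f s * (Polynomial.aeval f q1 * E x) := by ring
    _ = Polynomial.aeval f s * ∑ i, Polynomial.aeval f (g1 i) * D i x := by rw [hw1]
    _ = ∑ i, Polynomial.aeval f (g1 i * s) * D i x := by
        rw [Finset.mul_sum]
        exact Finset.sum_congr rfl fun i _ => by rw [map_mul]; ring

theorem statement10 (k : Type*) [Field k] [CharZero k] (n : ℕ) (hn : 1 ≤ n)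
    (A : Type*) [CommRing A] [IsDomain A] [UniqueFactorizationMonoid A] [Algebra k A]
    (htrdeg : ∃ b : Fin (n + 1) → FractionRing A, IsTranscendenceBasis k b)
    (hunits : ∀ a : A, IsUnit a → ∃ c : k, algebraMap k A c = a)
    (D : Fin n → Derivation k A A)
    (hLN : ∀ i, (D i).IsLocallyNilpotent)
    (hcomm : ∀ i j, ∀ x : A, D i (D j x) = D j (D i x))
    (hindep : ∀ a : Fin n → A,
      (∀ x : A, ∑ i, a i * D i x = 0) → ∀ i, a i = 0)
    (f : A) (hf : f ∉ (algebraMap k A).range)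
    (hker : {a : A | ∀ i, D i a = 0} = (Algebra.adjoin k {f} : Subalgebra k A))
    (M : Set (Derivation k A A))
    (hM : M = {E : Derivation k A A | ∃ q : Polynomial k, q ≠ 0 ∧
      ∃ g : Fin n → Polynomial k, ∀ x : A,
        Polynomial.aeval f q * E x = ∑ i, Polynomial.aeval f (g i) * D i x}) :
    ∃ E : Fin n → Derivation k A A,
      (∀ i, E i ∈ M) ∧
      (∀ i, (E i).IsLocallyNilpotent) ∧
      (∀ i j, ∀ x : A, E i (E j x) = E j (E i x)) ∧
      (∀ a : Fin n → A, (∀ x : A, ∑ i, a i * E i x = 0) → ∀ i, a i = 0) ∧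
      (∀ E' ∈ M, ∃! h : Fin n → Polynomial k,
        ∀ x : A, E' x = ∑ i, Polynomial.aeval f (h i) * E i x) ∧
      (∀ α : k, LinIndepModulo D (Ideal.span {f - algebraMap k A α}) →
        LinIndepModulo E (Ideal.span {f - algebraMap k A α})) := by
  classical
  have hft : Transcendental k f := st10_trans hunits f hf
  have injF : Function.Injective (Polynomial.aeval f : k[X] →ₐ[k] A) :=
    transcendental_iff_injective.mp hft
  have hD0 : ∀ i (p : k[X]), D i (Polynomial.aeval f p) = 0 := by
    intro i p
    have hmem : Polynomial.aeval f p ∈ (Algebra.adjoin k {f} : Subalgebra k A) := by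
      rw [Algebra.adjoin_singleton_eq_range_aeval]
      exact ⟨p, rfl⟩
    have h2 : Polynomial.aeval f p ∈ {a : A | ∀ i, D i a = 0} := by
      rw [hker]; exact hmem
    exact h2 i
  obtain ⟨q0, hq0ne, hq0⟩ := st10_q0 D hindep hunits f hft
  have hq0A : Polynomial.aeval f q0 ≠ 0 := st10_aeval_ne f hft hq0ne
  have hMiff : ∀ E' : Derivation k A A, E' ∈ M ↔ ∃ g : Fin n → k[X],
      ∀ x, Polynomial.aeval f q0 * E' x = ∑ i, Polynomial.aeval f (g i) * D i x := by
    intro E'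
    constructor
    · intro hE'
      rw [hM] at hE'
      obtain ⟨q, hq, g, hwit⟩ := hE'
      exact hq0 E' q g hq hwit
    · rintro ⟨g, hg⟩
      rw [hM]
      exact ⟨q0, hq0ne, g, hg⟩
  -- the submodule of coefficient vectors
  let NN : Submodule (Polynomial k) (Fin n → Polynomial k) :=
    { carrier := {g | ∃ E' : Derivation k A A,
        ∀ x, Polynomial.aeval f q0 * E' x = ∑ i, Polynomial.aeval f (g i) * D i x}
      add_mem' := by
        rintro g g' ⟨E1, h1⟩ ⟨E2, h2⟩
        refine ⟨E1 + E2, fun x => ?_⟩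
        have h3 : ((E1 + E2 : Derivation k A A)) x = E1 x + E2 x := rfl
        rw [h3, mul_add, h1, h2, ← Finset.sum_add_distrib]
        exact Finset.sum_congr rfl fun i _ => by rw [Pi.add_apply, map_add]; ring
      zero_mem' := ⟨0, fun x => by simp⟩
      smul_mem' := by
        rintro p g ⟨E1, h1⟩
        refine ⟨Polynomial.aeval f p • E1, fun x => ?_⟩
        have h2 : (Polynomial.aeval f p • E1) x = Polynomial.aeval f p * E1 x := rfl
        rw [h2]
        calc Polynomial.aeval f q0 * (Polynomial.aeval f p * E1 x)
            = Polynomial.aeval f p * (Polynomial.aeval f q0 * E1 x) := by ring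
          _ = Polynomial.aeval f p * ∑ i, Polynomial.aeval f (g i) * D i x := by rw [h1]
          _ = ∑ i, Polynomial.aeval f ((p • g) i) * D i x := by
              rw [Finset.mul_sum]
              exact Finset.sum_congr rfl fun i _ => by
                rw [Pi.smul_apply, smul_eq_mul, map_mul]; ring }
  have hmemNN : ∀ g : Fin n → Polynomial k, g ∈ NN ↔ ∃ E' : Derivation k A A,
      ∀ x, Polynomial.aeval f q0 * E' x = ∑ i, Polynomial.aeval f (g i) * D i x :=
    fun g => Iff.rfl
  -- the canonical elements coming from the D l
  have hDl : ∀ (l : Fin n) (x : A), Polynomial.aeval f q0 * D l x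
      = ∑ i, Polynomial.aeval f ((q0 • (Pi.single (M := fun _ => Polynomial k) l 1) : Fin n → Polynomial k) i) * D i x := by
    intro l x
    calc Polynomial.aeval f q0 * D l x
        = ∑ i, (if i = l then Polynomial.aeval f q0 * D i x else 0) := by
          rw [Finset.sum_ite_eq' Finset.univ l fun i => Polynomial.aeval f q0 * D i x]
          simp
      _ = ∑ i, Polynomial.aeval f ((q0 • (Pi.single (M := fun _ => Polynomial k) l 1) : Fin n → Polynomial k) i) * D i x := by
          refine Finset.sum_congr rfl fun i _ => ?_
          rw [Pi.smul_apply, smul_eq_mul, map_mul, Pi.single_apply]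
          by_cases h : i = l
          · simp [h]
          · simp [h]
  have hwmem : ∀ l : Fin n, (q0 • (Pi.single (M := fun _ => Polynomial k) l 1) : Fin n → Polynomial k) ∈ NN :=
    fun l => ⟨D l, hDl l⟩
  -- basis of NN
  obtain ⟨m, bN⟩ := Submodule.basisOfPid (Pi.basisFun (Polynomial k) (Fin n)) NN
  have hwli : LinearIndependent (Polynomial k)
      (fun l => (⟨q0 • (Pi.single (M := fun _ => Polynomial k) l 1), hwmem l⟩ : NN)) := by
    rw [Fintype.linearIndependent_iff]
    intro c hc l
    have hc' : ∑ l, c l • (q0 • (Pi.single (M := fun _ => Polynomial k) l 1) : Fin n → Polynomial k) = 0 := by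
      have h2 := congrArg (fun z : NN => (z : Fin n → Polynomial k)) hc
      simpa using h2
    have hcl := congrFun hc' l
    rw [Finset.sum_apply] at hcl
    simp only [Pi.smul_apply, smul_eq_mul, Pi.single_apply, Pi.zero_apply] at hcl
    have h3 : ∑ l', (if l = l' then c l' * q0 else 0) = 0 := by
      refine Eq.trans (Finset.sum_congr rfl fun l' _ => ?_) hcl
      split_ifs with h
      · ring
      · ring
    rw [Finset.sum_ite_eq Finset.univ l fun l' => c l' * q0] at h3
    simp only [Finset.mem_univ, if_true] at h3
    exact (mul_eq_zero.mp h3).resolve_right hq0ne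
  have hmn : m = n := by
    have h1 : m ≤ n := by
      have li1 : LinearIndependent (Polynomial k)
          (fun i => ((bN i : NN) : Fin n → Polynomial k)) :=
        bN.linearIndependent.map' NN.subtype NN.ker_subtype
      simpa using (Pi.basisFun (Polynomial k) (Fin n)).card_le_card_of_linearIndependent li1
    have h2 : n ≤ m := by
      simpa using bN.card_le_card_of_linearIndependent hwli
    omega
  let bN' : Module.Basis (Fin n) (Polynomial k) NN := bN.reindex (finCongr hmn)
  set G : Fin n → Fin n → Polynomial k := fun i => ((bN' i : NN) : Fin n → Polynomial k)
    with hGdef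
  have hGmem : ∀ i, ∃ E' : Derivation k A A,
      ∀ x, Polynomial.aeval f q0 * E' x = ∑ j, Polynomial.aeval f (G i j) * D j x :=
    fun i => (bN' i).2
  choose EE hEE using hGmem
  have hEM : ∀ i, EE i ∈ M := fun i => (hMiff (EE i)).mpr ⟨G i, hEE i⟩
  have hELN : ∀ i, (EE i).IsLocallyNilpotent :=
    fun i => st10_M_LND D (fun i a => hLN i a) hcomm f hft hD0 (EE i) q0 hq0ne (G i) (hEE i)
  have hEcomm : ∀ i j, ∀ x : A, EE i (EE j x) = EE j (EE i x) :=
    fun i j => st10_M_comm D hcomm f hft hD0 (EE i) q0 hq0ne (G i) (hEE i)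
      (EE j) q0 hq0ne (G j) (hEE j)
  -- key summation identity
  have hswap : ∀ (c : Fin n → A) (x : A), ∑ i, c i * (Polynomial.aeval f q0 * EE i x)
      = ∑ j, (∑ i, c i * Polynomial.aeval f (G i j)) * D j x := by
    intro c x
    calc ∑ i, c i * (Polynomial.aeval f q0 * EE i x)
        = ∑ i, c i * ∑ j, Polynomial.aeval f (G i j) * D j x := by
          refine Finset.sum_congr rfl fun i _ => by rw [hEE i x]
      _ = ∑ i, ∑ j, c i * (Polynomial.aeval f (G i j) * D j x) := by
          refine Finset.sum_congr rfl fun i _ => Finset.mul_sum _ _ _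
      _ = ∑ j, ∑ i, c i * (Polynomial.aeval f (G i j) * D j x) := Finset.sum_comm
      _ = ∑ j, (∑ i, c i * Polynomial.aeval f (G i j)) * D j x := by
          refine Finset.sum_congr rfl fun j _ => ?_
          rw [Finset.sum_mul]
          exact Finset.sum_congr rfl fun i _ => by ring
  -- determinant of G is nonzero
  have hGli : LinearIndependent (Polynomial k) G :=
    bN'.linearIndependent.map' NN.subtype NN.ker_subtype
  have hGdet : (Matrix.of G).det ≠ 0 := by
    intro h0
    obtain ⟨v, hv0, hv⟩ := Matrix.exists_vecMul_eq_zero_iff.mpr h0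
    apply hv0
    have hsum : ∑ i, v i • G i = 0 := by
      funext j
      rw [Finset.sum_apply]
      simp only [Pi.smul_apply, smul_eq_mul, Pi.zero_apply]
      have h1 := congrFun hv j
      rw [st10_vecMul_apply] at h1
      exact h1
    funext i
    exact Fintype.linearIndependent_iff.mp hGli v hsum i
  -- linear independence of the EE over A
  have hEind : ∀ a : Fin n → A, (∀ x, ∑ i, a i * EE i x = 0) → ∀ i, a i = 0 := by
    intro a ha
    have hb : ∀ j, ∑ i, a i * Polynomial.aeval f (G i j) = 0 := by
      apply hindep
      intro x
      rw [← hswap a x]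
      calc ∑ i, a i * (Polynomial.aeval f q0 * EE i x)
          = Polynomial.aeval f q0 * ∑ i, a i * EE i x := by
            rw [Finset.mul_sum]
            exact Finset.sum_congr rfl fun i _ => by ring
        _ = 0 := by rw [ha x, mul_zero]
    set GA : Matrix (Fin n) (Fin n) A := Matrix.of fun i j => Polynomial.aeval f (G i j)
      with hGA
    have hva : Matrix.vecMul a GA = 0 := by
      funext j
      rw [st10_vecMul_apply]
      exact hb j
    have hcr := st10_cramer a GA
    rw [hva, Matrix.zero_vecMul] at hcr
    intro i
    have h5 : GA.det * a i = 0 := by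
      have h8 := congrFun hcr i
      simpa using h8.symm
    have hdet : GA.det ≠ 0 := by
      have h7 : GA.det = Polynomial.aeval f (Matrix.of G).det := by
        have h8 := (Polynomial.aeval f : k[X] →ₐ[k] A).map_det (Matrix.of G)
        rw [h8, AlgHom.mapMatrix_apply]
        rfl
      rw [h7]
      exact st10_aeval_ne f hft hGdet
    exact (mul_eq_zero.mp h5).resolve_left hdet
  -- unique representation of elements of M
  have hrepr : ∀ E' ∈ M, ∃! h : Fin n → Polynomial k,
      ∀ x : A, E' x = ∑ i, Polynomial.aeval f (h i) * EE i x := by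
    intro E' hE'
    obtain ⟨g', hg'⟩ := (hMiff E').mp hE'
    have hgmem : g' ∈ NN := ⟨E', hg'⟩
    set hh : Fin n → Polynomial k := fun i => bN'.repr ⟨g', hgmem⟩ i with hhdef
    have hsum : ∑ i, hh i • G i = g' := by
      have h1 := bN'.sum_repr ⟨g', hgmem⟩
      have h2 := congrArg (fun z : NN => (z : Fin n → Polynomial k)) h1
      simpa [-Module.Basis.sum_repr] using h2
    have hex : ∀ x : A, E' x = ∑ i, Polynomial.aeval f (hh i) * EE i x := by
      intro x
      apply mul_left_cancel₀ hq0A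
      calc Polynomial.aeval f q0 * E' x
          = ∑ j, Polynomial.aeval f (g' j) * D j x := hg' x
        _ = ∑ j, (∑ i, Polynomial.aeval f (hh i) * Polynomial.aeval f (G i j)) * D j x := by
            refine Finset.sum_congr rfl fun j _ => ?_
            congr 1
            have h3 : g' j = ∑ i, hh i * G i j := by
              rw [← hsum, Finset.sum_apply]
              exact Finset.sum_congr rfl fun i _ => by rw [Pi.smul_apply, smul_eq_mul]
            rw [h3, map_sum]
            exact Finset.sum_congr rfl fun i _ => by rw [map_mul]
        _ = ∑ i, Polynomial.aeval f (hh i) * (Polynomial.aeval f q0 * EE i x) :=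
            (hswap (fun i => Polynomial.aeval f (hh i)) x).symm
        _ = Polynomial.aeval f q0 * ∑ i, Polynomial.aeval f (hh i) * EE i x := by
            rw [Finset.mul_sum]
            exact Finset.sum_congr rfl fun i _ => by ring
    refine ⟨hh, hex, ?_⟩
    intro y hy
    funext i
    apply injF
    have h4 : ∀ x : A, ∑ i, (Polynomial.aeval f (y i) - Polynomial.aeval f (hh i)) * EE i x
        = 0 := by
      intro x
      have h5 : ∑ i, Polynomial.aeval f (y i) * EE i x
          = ∑ i, Polynomial.aeval f (hh i) * EE i x := by rw [← hy x, ← hex x]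
      rw [← sub_eq_zero] at h5
      rw [← h5, ← Finset.sum_sub_distrib]
      exact Finset.sum_congr rfl fun i _ => by ring
    have h6 := hEind _ h4 i
    exact sub_eq_zero.mp h6
  -- the matrix H expressing the D l in terms of the EE i
  set Hm : Matrix (Fin n) (Fin n) (Polynomial k) :=
    Matrix.of fun l i => bN'.repr ⟨q0 • (Pi.single (M := fun _ => Polynomial k) l 1), hwmem l⟩ i with hHm
  have hHsum : ∀ l, ∑ i, Hm l i • G i = (q0 • (Pi.single (M := fun _ => Polynomial k) l 1) : Fin n → Polynomial k) := by
    intro l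
    have h1 := bN'.sum_repr ⟨q0 • (Pi.single (M := fun _ => Polynomial k) l 1), hwmem l⟩
    have h2 := congrArg (fun z : NN => (z : Fin n → Polynomial k)) h1
    simpa [-Module.Basis.sum_repr, hHm, hGdef] using h2
  have hDlE : ∀ (l : Fin n) (x : A), D l x = ∑ i, Polynomial.aeval f (Hm l i) * EE i x := by
    intro l x
    apply mul_left_cancel₀ hq0A
    calc Polynomial.aeval f q0 * D l x
        = ∑ j, Polynomial.aeval f ((q0 • (Pi.single (M := fun _ => Polynomial k) l 1) : Fin n → Polynomial k) j) * D j x :=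
          hDl l x
      _ = ∑ j, (∑ i, Polynomial.aeval f (Hm l i) * Polynomial.aeval f (G i j)) * D j x := by
          refine Finset.sum_congr rfl fun j _ => ?_
          congr 1
          have h3 : (q0 • (Pi.single (M := fun _ => Polynomial k) l 1) : Fin n → Polynomial k) j = ∑ i, Hm l i * G i j := by
            rw [← hHsum l, Finset.sum_apply]
            exact Finset.sum_congr rfl fun i _ => by rw [Pi.smul_apply, smul_eq_mul]
          rw [h3, map_sum]
          exact Finset.sum_congr rfl fun i _ => by rw [map_mul]
      _ = ∑ i, Polynomial.aeval f (Hm l i) * (Polynomial.aeval f q0 * EE i x) :=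
          (hswap (fun i => Polynomial.aeval f (Hm l i)) x).symm
      _ = Polynomial.aeval f q0 * ∑ i, Polynomial.aeval f (Hm l i) * EE i x := by
          rw [Finset.mul_sum]
          exact Finset.sum_congr rfl fun i _ => by ring
  have hadj : ∀ i j, (∑ l, Hm.adjugate i l * Hm l j) = if i = j then Hm.det else 0 := by
    intro i j
    have h1 := congrFun (congrFun (Matrix.adjugate_mul Hm) i) j
    rw [Matrix.mul_apply] at h1
    rw [h1]
    rw [Matrix.smul_apply, Matrix.one_apply, smul_eq_mul]
    by_cases h : i = j
    · simp [h]
    · simp [h]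
  -- the modular independence transfer
  have hmod : ∀ α : k, LinIndepModulo D (Ideal.span {f - algebraMap k A α}) →
      LinIndepModulo EE (Ideal.span {f - algebraMap k A α}) := by
    intro α hDmod a ha
    set I : Ideal A := Ideal.span {f - algebraMap k A α} with hI
    have hroot : ∀ p : Polynomial k, Polynomial.eval α p = 0 → Polynomial.aeval f p ∈ I := by
      intro p hp
      obtain ⟨s, hs⟩ := Polynomial.dvd_iff_isRoot.mpr hp
      rw [hs, map_mul]
      apply Ideal.mul_mem_right
      have h1 : Polynomial.aeval f (Polynomial.X - Polynomial.C α) = f - algebraMap k A α := by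
        rw [map_sub, Polynomial.aeval_X, Polynomial.aeval_C]
      rw [h1]
      exact Ideal.subset_span rfl
    have hsubmem : ∀ p : Polynomial k,
        Polynomial.aeval f p - algebraMap k A (Polynomial.eval α p) ∈ I := by
      intro p
      have h1 : Polynomial.aeval f (p - Polynomial.C (Polynomial.eval α p))
          = Polynomial.aeval f p - algebraMap k A (Polynomial.eval α p) := by
        rw [map_sub, Polynomial.aeval_C]
      rw [← h1]
      apply hroot
      simp
    by_cases htop : (1 : A) ∈ I
    · intro i
      have h1 : I = ⊤ := (Ideal.eq_top_iff_one I).mpr htop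
      rw [h1]
      exact Submodule.mem_top
    have hHdet : Polynomial.eval α Hm.det ≠ 0 := by
      intro h0
      have hdet0 : (Hm.map (Polynomial.evalRingHom α)).det = 0 := by
        have h8 := (Polynomial.evalRingHom α).map_det Hm
        rw [RingHom.mapMatrix_apply] at h8
        rw [← h8]
        exact h0
      obtain ⟨v, hv0, hv⟩ := Matrix.exists_vecMul_eq_zero_iff.mpr hdet0
      have hvI : ∀ x : A, ∑ l, (algebraMap k A (v l)) * D l x ∈ I := by
        intro x
        have hcalc : ∑ l, (algebraMap k A (v l)) * D l x
            = ∑ i, Polynomial.aeval f (∑ l, Polynomial.C (v l) * Hm l i) * EE i x := by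
          calc ∑ l, algebraMap k A (v l) * D l x
              = ∑ l, ∑ i, algebraMap k A (v l) * (Polynomial.aeval f (Hm l i) * EE i x) := by
                refine Finset.sum_congr rfl fun l _ => ?_
                rw [hDlE l x, Finset.mul_sum]
            _ = ∑ i, ∑ l, algebraMap k A (v l) * (Polynomial.aeval f (Hm l i) * EE i x) :=
                Finset.sum_comm
            _ = ∑ i, Polynomial.aeval f (∑ l, Polynomial.C (v l) * Hm l i) * EE i x := by
                refine Finset.sum_congr rfl fun i _ => ?_
                rw [map_sum, Finset.sum_mul]
                refine Finset.sum_congr rfl fun l _ => ?_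
                rw [map_mul, Polynomial.aeval_C]
                ring
        rw [hcalc]
        apply Ideal.sum_mem
        intro i _
        apply Ideal.mul_mem_right
        apply hroot
        rw [Polynomial.eval_finset_sum]
        have h2 := congrFun hv i
        rw [st10_vecMul_apply] at h2
        simp only [Pi.zero_apply] at h2
        refine Eq.trans (Finset.sum_congr rfl fun l _ => ?_) h2
        simp [Matrix.map_apply]
      have hvz := hDmod _ hvI
      obtain ⟨l, hl⟩ := Function.ne_iff.mp hv0
      apply htop
      have h2 : (1 : A) = algebraMap k A (v l)⁻¹ * algebraMap k A (v l) := by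
        rw [← map_mul, inv_mul_cancel₀ hl, map_one]
      rw [h2]
      exact Ideal.mul_mem_left _ _ (hvz l)
    set c : Fin n → A := fun l => ∑ i, a i * Polynomial.aeval f (Hm.adjugate i l) with hcdef
    have hcI : ∀ l, c l ∈ I := by
      apply hDmod
      intro x
      have hcalc : ∑ l, c l * D l x = Polynomial.aeval f Hm.det * ∑ i, a i * EE i x := by
        calc ∑ l, c l * D l x
            = ∑ l, ∑ j, c l * (Polynomial.aeval f (Hm l j) * EE j x) := by
              refine Finset.sum_congr rfl fun l _ => ?_
              rw [hDlE l x, Finset.mul_sum]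
          _ = ∑ j, ∑ l, c l * (Polynomial.aeval f (Hm l j) * EE j x) := Finset.sum_comm
          _ = ∑ j, ∑ i, a i * Polynomial.aeval f (∑ l, Hm.adjugate i l * Hm l j) * EE j x := by
              refine Finset.sum_congr rfl fun j _ => ?_
              calc ∑ l, c l * (Polynomial.aeval f (Hm l j) * EE j x)
                  = ∑ l, ∑ i, a i * Polynomial.aeval f (Hm.adjugate i l)
                      * (Polynomial.aeval f (Hm l j) * EE j x) := by
                    refine Finset.sum_congr rfl fun l _ => ?_
                    rw [hcdef, Finset.sum_mul]
                _ = ∑ i, ∑ l, a i * Polynomial.aeval f (Hm.adjugate i l)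
                      * (Polynomial.aeval f (Hm l j) * EE j x) := Finset.sum_comm
                _ = ∑ i, a i * Polynomial.aeval f (∑ l, Hm.adjugate i l * Hm l j) * EE j x := by
                    refine Finset.sum_congr rfl fun i _ => ?_
                    rw [map_sum, Finset.mul_sum, Finset.sum_mul]
                    refine Finset.sum_congr rfl fun l _ => ?_
                    rw [map_mul]
                    ring
          _ = ∑ j, a j * Polynomial.aeval f Hm.det * EE j x := by
              refine Finset.sum_congr rfl fun j _ => ?_
              rw [Finset.sum_eq_single j]
              · rw [hadj j j, if_pos rfl]
              · intro i _ hij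
                rw [hadj i j, if_neg hij, map_zero, mul_zero, zero_mul]
              · intro h
                exact absurd (Finset.mem_univ j) h
          _ = Polynomial.aeval f Hm.det * ∑ i, a i * EE i x := by
              rw [Finset.mul_sum]
              exact Finset.sum_congr rfl fun i _ => by ring
      rw [hcalc]
      exact Ideal.mul_mem_left _ _ (ha x)
    intro j
    have hdetI : a j * Polynomial.aeval f Hm.det ∈ I := by
      have hcalc : (∑ l, c l * Polynomial.aeval f (Hm l j))
          = a j * Polynomial.aeval f Hm.det := by
        calc ∑ l, c l * Polynomial.aeval f (Hm l j)
            = ∑ l, ∑ i, a i * Polynomial.aeval f (Hm.adjugate i l)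
              * Polynomial.aeval f (Hm l j) := by
              refine Finset.sum_congr rfl fun l _ => ?_
              rw [hcdef, Finset.sum_mul]
          _ = ∑ i, ∑ l, a i * Polynomial.aeval f (Hm.adjugate i l)
              * Polynomial.aeval f (Hm l j) := Finset.sum_comm
          _ = ∑ i, a i * Polynomial.aeval f (∑ l, Hm.adjugate i l * Hm l j) := by
              refine Finset.sum_congr rfl fun i _ => ?_
              rw [map_sum, Finset.mul_sum]
              refine Finset.sum_congr rfl fun l _ => ?_
              rw [map_mul]
              ring
          _ = a j * Polynomial.aeval f Hm.det := by
              rw [Finset.sum_eq_single j]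
              · rw [hadj j j, if_pos rfl]
              · intro i _ hij
                rw [hadj i j, if_neg hij, map_zero, mul_zero]
              · intro h
                exact absurd (Finset.mem_univ j) h
      rw [← hcalc]
      exact Ideal.sum_mem _ fun l _ => Ideal.mul_mem_right _ _ (hcI l)
    have h2 : a j * algebraMap k A (Polynomial.eval α Hm.det) ∈ I := by
      have h3 : a j * algebraMap k A (Polynomial.eval α Hm.det)
          = a j * Polynomial.aeval f Hm.det
            - a j * (Polynomial.aeval f Hm.det - algebraMap k A (Polynomial.eval α Hm.det)) := by
        ring
      rw [h3]
      exact Ideal.sub_mem _ hdetI (Ideal.mul_mem_left _ _ (hsubmem Hm.det))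
    have h4 : a j = algebraMap k A (Polynomial.eval α Hm.det)⁻¹
        * (a j * algebraMap k A (Polynomial.eval α Hm.det)) := by
      have h5 : algebraMap k A (Polynomial.eval α Hm.det)⁻¹
          * algebraMap k A (Polynomial.eval α Hm.det) = 1 := by
        rw [← map_mul, inv_mul_cancel₀ hHdet, map_one]
      calc a j = a j * 1 := by rw [mul_one]
        _ = a j * (algebraMap k A (Polynomial.eval α Hm.det)⁻¹
            * algebraMap k A (Polynomial.eval α Hm.det)) := by rw [h5]
        _ = _ := by ring
    rw [h4]
    exact Ideal.mul_mem_left _ _ h2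
  exact ⟨EE, hEM, hELN, hEcomm, hEind, hrepr, hmod⟩
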